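/- Let Δ > 0, p > 0, and let f : ℝ → ℝ be convex on [0,Δ] with f(0) = 0 and f(v) ≥ 0 for all v ∈ [0,Δ]. Define g(v) = (p − f(v))·v, let v̂ ∈ [0,Δ] be a maximizer of g over [0,Δ], let π ≥ 1, and let v̄ ∈ [0, v̂] satisfy π·g(v̄) ≤ g(v̂). Then v̄·p·(1 + √(1 − 1/π)) ≤ 2·g(v̄); equivalently v̄ ≤ [2/(1 + √(1 − 1/π))]·g(v̄)/p. -/

import Mathlib

/-- Per-slot selling bound for one-way trading with convex price elasticity
(Lemma 11 of the paper). -/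
theorem stmt16 (Δ p : ℝ) (hΔ : 0 < Δ) (hp : 0 < p)
    (f : ℝ → ℝ) (hf : ConvexOn ℝ (Set.Icc 0 Δ) f) (hf0 : f 0 = 0)
    (hfnn : ∀ v ∈ Set.Icc (0:ℝ) Δ, 0 ≤ f v)
    (g : ℝ → ℝ) (hg : ∀ v, g v = (p - f v) * v)
    (vhat : ℝ) (hvhat : vhat ∈ Set.Icc 0 Δ) (hmax : IsMaxOn g (Set.Icc 0 Δ) vhat)
    (pi : ℝ) (hpi : 1 ≤ pi)
    (vb : ℝ) (hvb : vb ∈ Set.Icc 0 vhat) (hkeep : pi * g vb ≤ g vhat) :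
    vb * p * (1 + Real.sqrt (1 - 1 / pi)) ≤ 2 * g vb := by
  obtain ⟨hvb0, hvbv⟩ := hvb
  rcases eq_or_lt_of_le hvb0 with h0 | h0
  · simp [← h0, hg]
  have hW : 0 < vhat := lt_of_lt_of_le h0 hvbv
  have hmem0 : (0:ℝ) ∈ Set.Icc (0:ℝ) Δ := ⟨le_refl 0, hΔ.le⟩
  have hconv : ∀ a : ℝ, 0 ≤ a → a ≤ 1 → f (a * vhat) ≤ a * f vhat := by
    intro a ha0 ha1
    have := hf.2 hmem0 hvhat (by linarith : (0:ℝ) ≤ 1 - a) ha0 (by ring)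
    simpa [hf0] using this
  -- f vhat ≤ p/2
  have hfv2 : f vhat ≤ p / 2 := by
    by_contra hcon
    push_neg at hcon
    have hfpos : 0 < f vhat := by linarith
    set lam := p / (2 * f vhat) with hlam
    have hl0 : 0 < lam := div_pos hp (by linarith)
    have hl1 : lam < 1 := by rw [div_lt_one (by linarith)]; linarith
    have h1 : f (lam * vhat) ≤ lam * f vhat := hconv lam hl0.le hl1.le
    have hmemlv : lam * vhat ∈ Set.Icc (0:ℝ) Δ := by
      constructor
      · positivity
      · nlinarith [hvhat.2]
    have h2 : g (lam * vhat) ≤ g vhat := hmax hmemlv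
    rw [hg, hg] at h2
    have hlamf : lam * (2 * f vhat) = p := by
      rw [hlam]; field_simp
    have hlf : lam * f vhat = p / 2 := by linarith
    have hA : p / 2 * (lam * vhat) ≤ (p - f vhat) * vhat := by
      have hnn : 0 ≤ (p - f (lam * vhat) - p / 2) * (lam * vhat) :=
        mul_nonneg (by linarith) (le_of_lt (mul_pos hl0 hW))
      linarith [h2, hnn]
    have hB : p / 2 * p * vhat = p / 2 * (lam * vhat) * (2 * f vhat) := by
      linear_combination (-(p / 2 * vhat)) * hlamf
    have hC : p / 2 * p * vhat ≤ (p - f vhat) * vhat * (2 * f vhat) := by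
      rw [hB]
      exact mul_le_mul_of_nonneg_right hA (by positivity)
    have h2fp : 0 < 2 * f vhat - p := by linarith
    have hD : 0 < vhat * ((2 * f vhat - p) * (2 * f vhat - p)) :=
      mul_pos hW (mul_pos h2fp h2fp)
    linarith [hC, hD]
  -- s basics
  set s := Real.sqrt (1 - 1 / pi) with hsdef
  have hpi0 : 0 < pi := lt_of_lt_of_le one_pos hpi
  have h1pi : 0 ≤ 1 - 1 / pi := by
    have : 1 / pi ≤ 1 := by rw [div_le_one hpi0]; exact hpi
    linarith
  have hs0 : 0 ≤ s := Real.sqrt_nonneg _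
  have hs2 : s ^ 2 = 1 - 1 / pi := Real.sq_sqrt h1pi
  have hs1 : s ≤ 1 := by
    nlinarith [hs2, div_pos one_pos hpi0]
  have hpis : pi * (1 - s ^ 2) = 1 := by
    rw [hs2]; field_simp; ring
  -- t
  set t := vb / vhat with htdef
  have ht0 : 0 < t := div_pos h0 hW
  have htv : vb = t * vhat := by rw [htdef, div_mul_cancel₀ _ hW.ne']
  have ht1 : t ≤ 1 := by rw [htdef, div_le_one hW]; exact hvbv
  have hfA : f vb ≤ t * f vhat := by
    have := hconv t ht0.le ht1
    rwa [← htv] at this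
  -- fact (I)
  have hI : p * vb - t * (p / 2) * vb ≤ g vb := by
    rw [hg]
    linarith [mul_le_mul_of_nonneg_right hfA hvb0,
      mul_le_mul_of_nonneg_right (mul_le_mul_of_nonneg_left hfv2 ht0.le) hvb0]
  -- fact (II)
  have hgv : g vhat = p * vhat - f vhat * vhat := by rw [hg]; ring
  have hfvv : f vhat * vhat ≤ p * vhat - pi * g vb := by linarith [hkeep]
  have hII : p * vb * (1 - t) ≤ g vb * (1 - pi * t ^ 2) := by
    have e1 : f vb * vb ≤ t * f vhat * vb :=
      mul_le_mul_of_nonneg_right hfA hvb0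
    have e2 : t * f vhat * vb = t ^ 2 * (f vhat * vhat) := by rw [htv]; ring
    have e3 : t ^ 2 * (f vhat * vhat) ≤ t ^ 2 * (p * vhat - pi * g vb) :=
      mul_le_mul_of_nonneg_left hfvv (by positivity)
    have e4 : t ^ 2 * (p * vhat) = t * (p * vb) := by rw [htv]; ring
    have e5 : g vb = p * vb - f vb * vb := by rw [hg]; ring
    linarith [e1, e3, e2, e4, e5]
  rcases le_or_gt t (1 - s) with hcase | hcase
  · -- easy case via (I)
    have : 0 ≤ p * vb * (1 - s - t) :=
      mul_nonneg (mul_nonneg hp.le hvb0) (by linarith)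
    linarith [hI, this]
  rcases lt_or_ge (pi * t ^ 2) 1 with hc2 | hc2
  · -- main case
    have hid : 2 * (1 - t) - (1 + s) * (1 - pi * t ^ 2)
        = (1 + s) * pi * (t - (1 - s)) ^ 2 := by
      linear_combination (2 * t - (1 - s)) * hpis
    have hpvb : 0 ≤ p * vb := mul_nonneg hp.le hvb0
    have h1' : p * vb * ((1 + s) * (1 - pi * t ^ 2)) ≤ p * vb * (2 * (1 - t)) := by
      have hnn : 0 ≤ p * vb * ((1 + s) * pi * (t - (1 - s)) ^ 2) :=
        mul_nonneg hpvb (by positivity)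
      have e : p * vb * (2 * (1 - t)) - p * vb * ((1 + s) * (1 - pi * t ^ 2))
          = p * vb * ((1 + s) * pi * (t - (1 - s)) ^ 2) := by
        linear_combination (p * vb) * hid
      linarith [hnn, e]
    have hpos : 0 < 1 - pi * t ^ 2 := by linarith
    by_contra hcon
    push_neg at hcon
    have hmul := mul_lt_mul_of_pos_right hcon hpos
    linarith [h1', hII, hmul]
  · -- degenerate case
    exfalso
    have hgpos : 0 < g vb := by
      have h := mul_nonneg (mul_nonneg (by linarith : (0:ℝ) ≤ 1 - t)
        (by positivity : (0:ℝ) ≤ p / 2)) hvb0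
      have h2 := mul_pos hp h0
      linarith [hI, h, h2]
    have hnp : g vb * (1 - pi * t ^ 2) ≤ 0 :=
      mul_nonpos_of_nonneg_of_nonpos hgpos.le (by linarith)
    have ht1' : 1 ≤ t := by
      by_contra hcont
      push_neg at hcont
      have := mul_pos (mul_pos hp h0) (by linarith : (0:ℝ) < 1 - t)
      linarith [hII, hnp, this]
    have hteq : t = 1 := le_antisymm ht1 ht1'
    have hpi1 : pi = 1 := by
      have hle : pi ≤ 1 := by
        rw [hteq] at hII
        nlinarith [hII, hgpos]
      exact le_antisymm hle hpi
    have hseq : s = 0 := by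
      rw [hsdef, hpi1]; simp
    rw [hseq, hteq] at hcase
    linarith
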